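/- Let C ⊆ Cend_N = M_N(k[D,v]) be a conformal subalgebra (a k[D]-submodule closed under all n-products a∘_n b = A(v)·∂_v^n(B(v))) such that its operator algebra S(C) equals M_N(k[q + h(p)]) for some polynomial h ∈ k[p]. Then h is a constant polynomial. -/

import Mathlib

open Polynomial

set_option synthInstance.maxHeartbeats 1000000
set_option maxHeartbeats 1000000

noncomputable section

variable (k : Type*) [Field k] [CharZero k]

/-- The operator `p`: multiplication by `X` on `k[X]`. -/
def pOp : Module.End k (Polynomial k) := LinearMap.mulLeft k (X : Polynomial k)

/-- The operator `q = d/dX` on `k[X]`. -/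
def qOp : Module.End k (Polynomial k) := derivative

/-- The (first) Weyl algebra, realized concretely as the subalgebra of
`End_k(k[X])` generated by multiplication by `X` and `d/dX`.  (In characteristic
zero this is a faithful model of `k⟨p,q | qp - pq = 1⟩`.) -/
def WeylA : Subalgebra k (Module.End k (Polynomial k)) :=
  Algebra.adjoin k {pOp k, qOp k}

/-- The element `p` of the Weyl algebra. -/
def pW : WeylA k := ⟨pOp k, Algebra.subset_adjoin (Set.mem_insert _ _)⟩

/-- The element `q` of the Weyl algebra. -/
def qW : WeylA k := ⟨qOp k, Algebra.subset_adjoin (Set.mem_insert_of_mem _ rfl)⟩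

variable (N : ℕ)

/-- `M_N(W)`, the `N×N` matrices over the Weyl algebra. -/
abbrev MW := Matrix (Fin N) (Fin N) (WeylA k)

/-- The scalar matrix `p·Id_N`. -/
def pM : MW k N := Matrix.diagonal fun _ => pW k

/-- The scalar matrix `q·Id_N`. -/
def qM : MW k N := Matrix.diagonal fun _ => qW k

/-- The derivation `∂_q(a) = [a,p]` on `M_N(W)`. -/
def dq (a : MW k N) : MW k N := a * pM k N - pM k N * a

/-- Evaluation of a polynomial at `p`, i.e. the embedding `k[p] → W`. -/
def polyP : Polynomial k →ₐ[k] WeylA k := Polynomial.aeval (pW k)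

/-- Evaluation of a polynomial at `q`, i.e. the embedding `k[q] → W`. -/
def polyQ : Polynomial k →ₐ[k] WeylA k := Polynomial.aeval (qW k)

/-- Entries of `Cend_N = M_N(k[D,v])`: polynomials in `D` (outer variable)
with coefficients in `k[v]` (inner variable). -/
abbrev EE (k : Type*) [Field k] := Polynomial (Polynomial k)

/-- `Cend_N` as `N×N` matrices over `k[D,v]`. -/
abbrev CM (k : Type*) [Field k] (N : ℕ) := Matrix (Fin N) (Fin N) (EE k)

/-- Polynomials in `λ` (outer) over `k[D,v]`, used to encode the
`λ`-product of `Cend_N`. -/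
abbrev LL (k : Type*) [Field k] := Polynomial (EE k)

/-- Substitution `D ↦ -λ`, `v ↦ v` (applied to the left factor). -/
def phiA : EE k →+* LL k :=
  Polynomial.eval₂RingHom
    ((Polynomial.C : EE k →+* LL k).comp (Polynomial.C : Polynomial k →+* EE k))
    (-(Polynomial.X : LL k))

/-- Substitution `v ↦ v + λ` on `k[v]`. -/
def gB : Polynomial k →+* LL k :=
  Polynomial.eval₂RingHom
    (((Polynomial.C : EE k →+* LL k).comp (Polynomial.C : Polynomial k →+* EE k)).comp
      (Polynomial.C : k →+* Polynomial k))
    (Polynomial.C (Polynomial.C (Polynomial.X : Polynomial k)) + (Polynomial.X : LL k))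

/-- Substitution `D ↦ D + λ`, `v ↦ v + λ` (applied to the right factor). -/
def phiB : EE k →+* LL k :=
  Polynomial.eval₂RingHom (gB k) (Polynomial.C (Polynomial.X : EE k) + (Polynomial.X : LL k))

/-- The `n`-th conformal product on `Cend_N = H ⊗ M_N(k[v])`, determined by
`A(v) ∘_n B(v) = A(v)·∂_v^n(B(v))` and the sesquilinearity axioms; it is
extracted as `n!` times the `λ^n`-coefficient of `a(-λ,v)·b(D+λ,v+λ)`. -/
def nmul (N : ℕ) (n : ℕ) (a b : CM k N) : CM k N :=
  ((a.map (phiA k)) * (b.map (phiB k))).map fun e => Nat.factorial n • e.coeff n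

/-- The action of `D` on `Cend_N` (multiplication by `D`). -/
def Dmul (N : ℕ) (a : CM k N) : CM k N := a.map fun e => (Polynomial.X : EE k) * e

/-- `C ⊆ Cend_N` is a conformal subalgebra: a `k[D]`-submodule closed under
all the `n`-products. -/
def IsConfSubalgebra (N : ℕ) (C : Submodule k (CM k N)) : Prop :=
  (∀ a ∈ C, Dmul k N a ∈ C) ∧ ∀ a ∈ C, ∀ b ∈ C, ∀ n : ℕ, nmul k N n a b ∈ C

/-- The coefficient matrices `A_s(v)` of `a = Σ_s (-D)^{(s)} ⊗ A_s(v)`. -/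
def Acoef (N : ℕ) (a : CM k N) (s : ℕ) : Matrix (Fin N) (Fin N) (Polynomial k) :=
  ((-1 : k) ^ s * (Nat.factorial s : k)) • a.map fun e => e.coeff s

/-- The operator `a(n) = Σ_s C(n,s)·A_s(p)·q^{n-s} ∈ M_N(W)` attached to
`a ∈ Cend_N`. -/
def opOf (N : ℕ) (a : CM k N) (n : ℕ) : MW k N :=
  ∑ s ∈ Finset.range (n + 1),
    (n.choose s) • ((Acoef k N a s).map (polyP k) * qM k N ^ (n - s))

/- ======================= auxiliary lemmas ======================= -/

lemma aeval_pOp_apply (g f : Polynomial k) :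
    (Polynomial.aeval (pOp k) g : Module.End k (Polynomial k)) f = g * f := by
  induction g using Polynomial.induction_on generalizing f with
  | C c =>
      simp [Module.algebraMap_end_apply, Polynomial.smul_eq_C_mul]
  | add p q hp hq =>
      simp [map_add, LinearMap.add_apply, hp, hq, add_mul]
  | monomial n c ih =>
      have hrw : (C c * X ^ (n + 1) : Polynomial k) = (C c * X ^ n) * X := by ring
      rw [hrw, map_mul, Polynomial.aeval_X, Module.End.mul_apply]
      have hX : (pOp k) f = X * f := rfl
      rw [hX, ih (X * f)]
      ring

lemma polyP_val (g : Polynomial k) :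
    ((polyP k g : WeylA k) : Module.End k (Polynomial k)) = Polynomial.aeval (pOp k) g := by
  have := Polynomial.aeval_algHom_apply (WeylA k).val (pW k) g
  have hp : ((pW k : WeylA k) : Module.End k (Polynomial k)) = pOp k := rfl
  simpa [polyP, hp] using this.symm

lemma polyP_apply (g f : Polynomial k) :
    ((polyP k g : WeylA k) : Module.End k (Polynomial k)) f = g * f := by
  rw [polyP_val, aeval_pOp_apply]

lemma qOp_pow_apply (e : ℕ) (f : Polynomial k) :
    (qOp k ^ e : Module.End k (Polynomial k)) f = derivative^[e] f := by
  exact Module.End.pow_apply _ e f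

lemma qW_pow_apply (e : ℕ) (f : Polynomial k) :
    ((qW k ^ e : WeylA k) : Module.End k (Polynomial k)) f = derivative^[e] f := by
  rw [← qOp_pow_apply]
  norm_cast

lemma opOf_entry (a : CM k N) (m : ℕ) (i j : Fin N) :
    (opOf k N a m) i j =
      ∑ s ∈ Finset.range (m + 1),
        (m.choose s) • (polyP k (Acoef k N a s i j) * qW k ^ (m - s)) := by
  unfold opOf
  rw [Matrix.sum_apply]
  refine Finset.sum_congr rfl fun s _ => ?_
  rw [Matrix.smul_apply]
  congr 1
  have : qM k N ^ (m - s) = Matrix.diagonal fun _ => qW k ^ (m - s) := by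
    rw [qM, Matrix.diagonal_pow]; rfl
  rw [this, Matrix.mul_diagonal, Matrix.map_apply]

/-- applying the entry to `1` recovers the `m`-th coefficient matrix -/
lemma opOf_apply_one (a : CM k N) (m : ℕ) (i j : Fin N) :
    ((opOf k N a m i j : WeylA k) : Module.End k (Polynomial k)) 1 = Acoef k N a m i j := by
  rw [opOf_entry]
  push_cast
  rw [Finset.sum_apply]
  rw [Finset.sum_eq_single m]
  · simp [Module.End.mul_apply, qW_pow_apply, polyP_apply]
  · intro s hs hsm
    have h1 : 1 ≤ m - s := by
      have : s ≤ m := Nat.lt_succ_iff.mp (Finset.mem_range.mp hs)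
      omega
    have hd : (derivative^[m - s] (1 : Polynomial k)) = 0 := by
      obtain ⟨e, he⟩ : ∃ e, m - s = e + 1 := ⟨m - s - 1, by omega⟩
      rw [he, Function.iterate_succ_apply]
      simp
    simp only [LinearMap.smul_apply, Module.End.mul_apply]
    refine smul_eq_zero_of_right _ ?_
    have he : ((qW k : Module.End k (Polynomial k)) ^ (m - s)) 1 = 0 :=
      (qOp_pow_apply k (m - s) 1).trans hd
    rw [he, map_zero]
  · intro hm
    exact absurd (Finset.self_mem_range_succ m) hm

lemma Acoef_high (a : CM k N) (m : ℕ) (i j : Fin N)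
    (hm : (a i j).natDegree < m) : Acoef k N a m i j = 0 := by
  unfold Acoef
  rw [Matrix.smul_apply, Matrix.map_apply]
  rw [Polynomial.coeff_eq_zero_of_natDegree_lt hm]
  simp

/- the sequence (q + h(p))^t applied to 1, with its degree/leading coefficient -/

lemma shift_pow_one_spec (h : Polynomial k) (hd : 0 < h.natDegree) (t : ℕ) :
    ((((qW k + polyP k h) ^ t : WeylA k) : Module.End k (Polynomial k)) 1).natDegree
        = t * h.natDegree ∧
      ((((qW k + polyP k h) ^ t : WeylA k) : Module.End k (Polynomial k)) 1).coeff
          (t * h.natDegree) = h.leadingCoeff ^ t := by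
  have hh0 : h ≠ 0 := fun e => by simp [e] at hd
  induction t with
  | zero => simp
  | succ t ih =>
      set u : Polynomial k :=
        (((qW k + polyP k h) ^ t : WeylA k) : Module.End k (Polynomial k)) 1 with hu
      obtain ⟨ih1, ih2⟩ := ih
      have hu0 : u ≠ 0 := by
        intro h0
        rw [h0] at ih2
        simp at ih2
        exact pow_ne_zero t (Polynomial.leadingCoeff_ne_zero.mpr hh0) ih2.symm
      have hulead : u.leadingCoeff = h.leadingCoeff ^ t := by
        rw [Polynomial.leadingCoeff, ih1, ih2]
      have hrec :
          (((qW k + polyP k h) ^ (t + 1) : WeylA k) : Module.End k (Polynomial k)) 1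
            = derivative u + h * u := by
        have h1 : (((qW k + polyP k h) ^ (t + 1) : WeylA k) : Module.End k (Polynomial k))
            = ((qW k + polyP k h : WeylA k) : Module.End k (Polynomial k)) *
              (((qW k + polyP k h) ^ t : WeylA k) : Module.End k (Polynomial k)) := by
          rw [pow_succ']
          norm_cast
        rw [h1, Module.End.mul_apply, ← hu]
        have h2 : ((qW k + polyP k h : WeylA k) : Module.End k (Polynomial k)) u
            = derivative u + h * u := by
          have h3 : ((qW k + polyP k h : WeylA k) : Module.End k (Polynomial k))
              = qOp k + ((polyP k h : WeylA k) : Module.End k (Polynomial k)) := by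
            norm_cast
          rw [h3, LinearMap.add_apply, polyP_apply]
          rfl
        rw [h2]
      have hmul_deg : (h * u).natDegree = (t + 1) * h.natDegree := by
        rw [Polynomial.natDegree_mul hh0 hu0, ih1]; ring
      have hderiv_lt : (derivative u).natDegree < (t + 1) * h.natDegree := by
        have h1 : (derivative u).natDegree ≤ u.natDegree - 1 :=
          Polynomial.natDegree_derivative_le u
        have h2 : u.natDegree < (t + 1) * h.natDegree := by
          rw [ih1]; nlinarith
        omega
      constructor
      · rw [hrec, Polynomial.natDegree_add_eq_right_of_natDegree_lt
          (by rw [hmul_deg]; exact hderiv_lt)]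
        exact hmul_deg
      · rw [hrec, Polynomial.coeff_add,
          Polynomial.coeff_eq_zero_of_natDegree_lt hderiv_lt, zero_add]
        have : (h * u).coeff ((t + 1) * h.natDegree) = (h * u).leadingCoeff := by
          rw [Polynomial.leadingCoeff, hmul_deg]
        rw [this, Polynomial.leadingCoeff_mul, hulead]
        ring

/-- if `aeval (q + h(p)) P` kills `1` and `h` is non-constant, then `P = 0` -/
lemma shift_aeval_one_injective (h : Polynomial k) (hd : 0 < h.natDegree)
    (P : Polynomial k)
    (hP : ((Polynomial.aeval (qW k + polyP k h) P : WeylA k) :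
        Module.End k (Polynomial k)) 1 = 0) : P = 0 := by
  by_contra hP0
  have hhne : h ≠ 0 := fun e => by
    rw [e, Polynomial.natDegree_zero] at hd; exact lt_irrefl 0 hd
  have happ : ((Polynomial.aeval (qW k + polyP k h) P : WeylA k) :
        Module.End k (Polynomial k)) 1
      = ∑ t ∈ Finset.range (P.natDegree + 1),
          P.coeff t •
            ((((qW k + polyP k h) ^ t : WeylA k) : Module.End k (Polynomial k)) 1) := by
    rw [Polynomial.aeval_eq_sum_range (qW k + polyP k h)]
    push_cast
    rw [Finset.sum_apply]
    refine Finset.sum_congr rfl fun t _ => ?_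
    rw [LinearMap.smul_apply]
  rw [happ] at hP
  have hcoeff := congrArg (fun f => Polynomial.coeff f (P.natDegree * h.natDegree)) hP
  simp only [Polynomial.finset_sum_coeff, Polynomial.coeff_smul, Polynomial.coeff_zero]
    at hcoeff
  rw [Finset.sum_eq_single P.natDegree] at hcoeff
  · obtain ⟨h1, h2⟩ := shift_pow_one_spec k h hd P.natDegree
    rw [h2] at hcoeff
    have hne : P.leadingCoeff ≠ 0 := Polynomial.leadingCoeff_ne_zero.mpr hP0
    have hlc : h.leadingCoeff ^ P.natDegree ≠ 0 :=
      pow_ne_zero _ (Polynomial.leadingCoeff_ne_zero.mpr hhne)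
    exact (mul_ne_zero hne hlc)
      (by rw [Polynomial.leadingCoeff, ← smul_eq_mul]; exact hcoeff)
  · intro t ht htD
    obtain ⟨h1, _⟩ := shift_pow_one_spec k h hd t
    have htlt : t < P.natDegree := by
      have := Finset.mem_range.mp ht; omega
    have hlt : t * h.natDegree < P.natDegree * h.natDegree :=
      (Nat.mul_lt_mul_right hd).mpr htlt
    have hz : ((((qW k + polyP k h) ^ t : WeylA k) :
          Module.End k (Polynomial k)) 1).coeff (P.natDegree * h.natDegree) = 0 :=
      Polynomial.coeff_eq_zero_of_natDegree_lt (lt_of_le_of_lt h1.le hlt)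
    rw [hz]
    simp
  · intro hD'
    exact absurd (Finset.self_mem_range_succ P.natDegree) hD'

/-- the constant coefficient of the entrywise action of `a(m)` on `X^(m-n)` -/
lemma opOf_apply_Xpow_coeff (a : CM k N) (n m : ℕ) (hnm : n ≤ m) (i j : Fin N) :
    Polynomial.coeff
        (((opOf k N a m i j : WeylA k) : Module.End k (Polynomial k)) (X ^ (m - n))) 0
      = (m.choose n : k) * ((m - n).factorial : k) * (Acoef k N a n i j).coeff 0 := by
  have hqw : (qW k : Module.End k (Polynomial k))
      = (derivative : Polynomial k →ₗ[k] Polynomial k) := rfl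
  rw [opOf_entry]
  push_cast
  rw [Finset.sum_apply, Polynomial.finset_sum_coeff]
  rw [Finset.sum_eq_single n]
  · simp only [LinearMap.smul_apply, Module.End.mul_apply, hqw, Module.End.pow_apply,
      Polynomial.iterate_derivative_X_pow_eq_smul, Nat.sub_self, pow_zero,
      Nat.descFactorial_self, polyP_apply, mul_smul_comm, mul_one,
      Polynomial.coeff_smul, smul_eq_mul]
    push_cast
    ring
  · intro s hs hsn
    have hsm : s ≤ m := Nat.lt_succ_iff.mp (Finset.mem_range.mp hs)
    simp only [LinearMap.smul_apply, Module.End.mul_apply, hqw, Module.End.pow_apply,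
      Polynomial.iterate_derivative_X_pow_eq_smul, polyP_apply, mul_smul_comm,
      Polynomial.coeff_smul, smul_eq_mul]
    rcases lt_or_gt_of_ne hsn with hlt | hgt
    · have : (m - n).descFactorial (m - s) = 0 :=
        Nat.descFactorial_eq_zero_iff_lt.mpr (by omega)
      rw [this]
      simp
    · have hj : m - n - (m - s) = s - n := by omega
      have hj1 : ¬ (s - n ≤ 0) := by omega
      rw [hj, Polynomial.coeff_mul_X_pow', if_neg hj1]
      simp
  · intro hn'
    exact absurd (Finset.mem_range.mpr (by omega)) hn'


/-- Lemma 4.3.4: if a conformal subalgebra `C ⊆ Cend_N` has operator algebra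
`S(C) = M_N(k[q + h(p)])`, then `h` is a constant polynomial. -/
theorem operator_algebra_shifted_current (N : ℕ) (hN : 0 < N)
    (C : Submodule k (CM k N)) (hC : IsConfSubalgebra k N C)
    (h : Polynomial k)
    (hS : {x : MW k N | ∃ a ∈ C, ∃ n : ℕ, x = opOf k N a n} =
      {x : MW k N | ∃ B : Matrix (Fin N) (Fin N) (Polynomial k),
        x = B.map (Polynomial.aeval (qW k + polyP k h))}) :
    ∃ c : k, h = Polynomial.C c := by
  by_contra hcon
  push_neg at hcon
  have hd : 0 < h.natDegree := by
    rcases Nat.eq_zero_or_pos h.natDegree with h0 | h0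
    · obtain ⟨c, hc⟩ := Polynomial.natDegree_eq_zero.mp h0
      exact absurd hc.symm (hcon c)
    · exact h0
  -- the identity operator matrix is in S(C)
  have hid : (1 : MW k N) ∈ {x : MW k N | ∃ a ∈ C, ∃ n : ℕ, x = opOf k N a n} := by
    rw [hS]
    exact ⟨1, by rw [Matrix.map_one _ (map_zero _) (map_one _)]⟩
  obtain ⟨a, haC, n, hn⟩ := hid
  obtain ⟨i⟩ : Nonempty (Fin N) := ⟨⟨0, hN⟩⟩
  -- consequently A_n = Id
  have hAn : Acoef k N a n i i = 1 := by
    have h1 : ((1 : MW k N) i i : Module.End k (Polynomial k)) 1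
        = Acoef k N a n i i := by
      rw [hn]; exact opOf_apply_one k N a n i i
    rw [Matrix.one_apply_eq] at h1
    simpa using h1.symm
  -- set up level m
  set T : ℕ := Finset.univ.sup (fun ij : Fin N × Fin N => (a ij.1 ij.2).natDegree) with hT
  set m : ℕ := n + T + 1 with hm
  have hTm : ∀ i' j' : Fin N, (a i' j').natDegree < m := by
    intro i' j'
    have : (a i' j').natDegree ≤ T :=
      Finset.le_sup (f := fun ij : Fin N × Fin N => (a ij.1 ij.2).natDegree)
        (Finset.mem_univ (i', j'))
    omega
  -- opOf a m is in the RHS set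
  have hmem : opOf k N a m ∈ {x : MW k N | ∃ B : Matrix (Fin N) (Fin N) (Polynomial k),
      x = B.map (Polynomial.aeval (qW k + polyP k h))} := by
    rw [← hS]
    exact ⟨a, haC, m, rfl⟩
  obtain ⟨B, hB⟩ := hmem
  -- evaluating at 1 shows each entry of B is 0, hence opOf a m = 0
  have hBzero : B = 0 := by
    refine Matrix.ext fun i' j' => ?_
    have h1 : ((opOf k N a m i' j' : WeylA k) : Module.End k (Polynomial k)) 1 = 0 := by
      rw [opOf_apply_one, Acoef_high k N a m i' j' (hTm i' j')]
    rw [hB, Matrix.map_apply] at h1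
    have := shift_aeval_one_injective k h hd (B i' j') h1
    simpa using this
  have hzero : opOf k N a m = 0 := by
    rw [hB, hBzero]
    ext i' j'
    simp [Matrix.map_apply]
  -- but the (i,i)-entry applied to X^(m-n) has nonzero constant coefficient
  have hc := opOf_apply_Xpow_coeff k N a n m (by omega) i i
  rw [hzero, hAn] at hc
  simp only [Matrix.zero_apply, ZeroMemClass.coe_zero, LinearMap.zero_apply,
    Polynomial.coeff_zero, Polynomial.coeff_one_zero, mul_one] at hc
  have hch : (m.choose n : k) ≠ 0 := by
    have : 0 < m.choose n := Nat.choose_pos (by omega)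
    exact_mod_cast Nat.cast_ne_zero.mpr (Nat.pos_iff_ne_zero.mp this)
  have hfa : ((m - n).factorial : k) ≠ 0 := by
    have : 0 < (m - n).factorial := Nat.factorial_pos _
    exact_mod_cast Nat.cast_ne_zero.mpr (Nat.pos_iff_ne_zero.mp this)
  exact (mul_ne_zero hch hfa) hc.symm

end
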